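/- With h(L) = Σ_{j>L} r_j and L(n) = sup{L : h(L) ≥ 1/n}, under the assumption r_{j+1}/r_j → a ∈ (0,1] (with eventual monotonicity), one has 1 ≤ n·h(L(n)) for all n and limsup_{n→∞} n·h(L(n)) ≤ 1/a. In particular if a = 1, then lim_{n→∞} n·h(L(n)) = 1. -/

import Mathlib

open Filter
open scoped Topology

noncomputable section

/-- The tail `h(L) = Σ_{j > L} r_j` of the step-length distribution. -/
def tailh (r : ℕ → ℝ) (L : ℕ) : ℝ := ∑' j : ℕ, r (L + 1 + j)

/-- `L(n) = sup {L ∈ ℤ_+ : h(L) ≥ 1/n}`. -/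
def Lscale (r : ℕ → ℝ) (n : ℕ) : ℕ := sSup {L : ℕ | 1 / (n : ℝ) ≤ tailh r L}

namespace NTailAux

variable {r : ℕ → ℝ}

lemma summable_tail (hs : Summable fun j : ℕ => r (j + 1)) (L : ℕ) :
    Summable fun j : ℕ => r (L + 1 + j) := by
  have h := (summable_nat_add_iff (f := fun j : ℕ => r (j + 1)) L).mpr hs
  exact h.congr fun n => congrArg r (by omega)

lemma tailh_pos (hrpos : ∀ j : ℕ, 1 ≤ j → 0 < r j)
    (hs : Summable fun j : ℕ => r (j + 1)) (L : ℕ) : 0 < tailh r L :=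
  Summable.tsum_pos (summable_tail hs L) (fun j => (hrpos _ (by omega)).le) 0 (hrpos _ (by omega))

lemma tailh_succ (hs : Summable fun j : ℕ => r (j + 1)) (L : ℕ) :
    tailh r L = r (L + 1) + tailh r (L + 1) := by
  have h := Summable.tsum_eq_zero_add (summable_tail hs L)
  unfold tailh
  rw [h]
  have h2 : (∑' b : ℕ, r (L + 1 + (b + 1))) = tailh r (L + 1) :=
    tsum_congr fun j => congrArg r (by omega)
  rw [h2, show L + 1 + 0 = L + 1 from by omega]
  rfl

lemma tailh_zero (hsum : ∑' j : ℕ, r (j + 1) = 1) : tailh r 0 = 1 := by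
  unfold tailh
  rw [tsum_congr fun j => congrArg r (by omega : 0 + 1 + j = j + 1)]
  exact hsum

lemma tailh_tendsto_zero (r : ℕ → ℝ) : Tendsto (tailh r) atTop (𝓝 0) := by
  have h := (tendsto_sum_nat_add r).comp (tendsto_add_atTop_nat 1)
  exact h.congr fun L => tsum_congr fun j => congrArg r (by show j + (L + 1) = L + 1 + j; omega)

lemma ratio_tendsto (hrpos : ∀ j : ℕ, 1 ≤ j → 0 < r j)
    (hs : Summable fun j : ℕ => r (j + 1)) {a : ℝ}
    (hratio : Tendsto (fun j : ℕ => r (j + 1) / r j) atTop (nhds a)) :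
    Tendsto (fun L : ℕ => tailh r (L + 1) / tailh r L) atTop (𝓝 a) := by
  rw [Metric.tendsto_atTop] at hratio ⊢
  intro ε hε
  obtain ⟨N, hN⟩ := hratio (ε / 2) (by linarith)
  refine ⟨N + 1, fun L hL => ?_⟩
  have key : ∀ m : ℕ, N ≤ m → 1 ≤ m →
      (a - ε / 2) * r m ≤ r (m + 1) ∧ r (m + 1) ≤ (a + ε / 2) * r m := by
    intro m hm hm1
    have h1 := hN m hm
    rw [Real.dist_eq, abs_lt] at h1
    have hr := hrpos m hm1
    constructor
    · exact le_of_lt ((lt_div_iff₀ hr).mp (by linarith [h1.1]))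
    · exact le_of_lt ((div_lt_iff₀ hr).mp (by linarith [h1.2]))
  have hsumL := summable_tail hs L
  have hsumL1 : Summable fun j : ℕ => r (L + 1 + j + 1) :=
    (summable_tail hs (L + 1)).congr fun j => congrArg r (by omega)
  have h1 : tailh r (L + 1) = ∑' j : ℕ, r (L + 1 + j + 1) :=
    tsum_congr fun j => congrArg r (by omega)
  have hub : tailh r (L + 1) ≤ (a + ε / 2) * tailh r L := by
    rw [h1, show (a + ε / 2) * tailh r L = ∑' j : ℕ, (a + ε / 2) * r (L + 1 + j) from
      tsum_mul_left.symm]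
    exact Summable.tsum_le_tsum (fun j => (key (L + 1 + j) (by omega) (by omega)).2) hsumL1
      (hsumL.mul_left _)
  have hlb : (a - ε / 2) * tailh r L ≤ tailh r (L + 1) := by
    rw [h1, show (a - ε / 2) * tailh r L = ∑' j : ℕ, (a - ε / 2) * r (L + 1 + j) from
      tsum_mul_left.symm]
    exact Summable.tsum_le_tsum (fun j => (key (L + 1 + j) (by omega) (by omega)).1) (hsumL.mul_left _)
      hsumL1
  have hp := tailh_pos hrpos hs L
  rw [Real.dist_eq, abs_lt]
  constructor
  · have := (le_div_iff₀ hp).mpr hlb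
    linarith
  · have := (div_le_iff₀ hp).mpr hub
    linarith

lemma sub_ratio_tendsto (hrpos : ∀ j : ℕ, 1 ≤ j → 0 < r j)
    (hs : Summable fun j : ℕ => r (j + 1)) {a : ℝ}
    (hratio : Tendsto (fun j : ℕ => r (j + 1) / r j) atTop (nhds a)) :
    Tendsto (fun L : ℕ => r (L + 1) / tailh r L) atTop (𝓝 (1 - a)) := by
  have h2 : Tendsto (fun L : ℕ => 1 - tailh r (L + 1) / tailh r L) atTop (𝓝 (1 - a)) :=
    tendsto_const_nhds.sub (ratio_tendsto hrpos hs hratio)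
  refine h2.congr fun L => ?_
  have ht := tailh_pos hrpos hs L
  have hsucc := tailh_succ hs L
  have : r (L + 1) = tailh r L - tailh r (L + 1) := by linarith
  rw [this]
  field_simp

end NTailAux

open NTailAux

theorem n_tail_Lscale (r : ℕ → ℝ) (a : ℝ) (ha0 : 0 < a) (ha1 : a ≤ 1)
    (hrpos : ∀ j : ℕ, 1 ≤ j → 0 < r j)
    (hsummable : Summable fun j : ℕ => r (j + 1))
    (hsum : ∑' j : ℕ, r (j + 1) = 1)
    (j₀ : ℕ) (hmono : ∀ j : ℕ, j₀ ≤ j → r (j + 1) ≤ r j)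
    (hratio : Tendsto (fun j : ℕ => r (j + 1) / r j) atTop (nhds a)) :
    (∀ n : ℕ, 1 ≤ n → 1 ≤ (n : ℝ) * tailh r (Lscale r n)) ∧
    Filter.limsup (fun n : ℕ => (n : ℝ) * tailh r (Lscale r n)) atTop ≤ 1 / a ∧
    (a = 1 → Tendsto (fun n : ℕ => (n : ℝ) * tailh r (Lscale r n)) atTop (nhds 1)) := by
  have htpos : ∀ L, 0 < tailh r L := tailh_pos hrpos hsummable
  have ht0 : tailh r 0 = 1 := tailh_zero hsum
  have htz : Tendsto (tailh r) atTop (𝓝 0) := tailh_tendsto_zero r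
  have hbdd : ∀ n : ℕ, 1 ≤ n → BddAbove {L : ℕ | 1 / (n : ℝ) ≤ tailh r L} := by
    intro n hn
    have hpos : (0 : ℝ) < 1 / (n : ℝ) := by positivity
    obtain ⟨N, hN⟩ := eventually_atTop.mp (htz.eventually_lt_const hpos)
    refine ⟨N, fun L hL => ?_⟩
    by_contra h
    push_neg at h
    exact absurd hL (not_le.mpr (hN L (le_of_lt h)))
  have hSmem : ∀ n : ℕ, 1 ≤ n → 1 / (n : ℝ) ≤ tailh r (Lscale r n) := by
    intro n hn
    have hn' : (1 : ℝ) ≤ n := by exact_mod_cast hn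
    have h0 : 0 ∈ {L : ℕ | 1 / (n : ℝ) ≤ tailh r L} := by
      simp only [Set.mem_setOf_eq, ht0]
      rw [div_le_one (by linarith)]
      exact hn'
    exact Nat.sSup_mem ⟨0, h0⟩ (hbdd n hn)
  have hSlt : ∀ n : ℕ, 1 ≤ n → tailh r (Lscale r n + 1) < 1 / (n : ℝ) := by
    intro n hn
    by_contra h
    push_neg at h
    have h2 : Lscale r n + 1 ≤ Lscale r n :=
      le_csSup (hbdd n hn) (h : Lscale r n + 1 ∈ {L : ℕ | 1 / (n : ℝ) ≤ tailh r L})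
    omega
  have claim1 : ∀ n : ℕ, 1 ≤ n → 1 ≤ (n : ℝ) * tailh r (Lscale r n) := by
    intro n hn
    have hn' : (0 : ℝ) < n := by exact_mod_cast Nat.lt_of_lt_of_le Nat.zero_lt_one hn
    have h := hSmem n hn
    rw [div_le_iff₀ hn'] at h
    linarith
  -- L(n) → ∞
  have hLtop : Tendsto (fun n : ℕ => Lscale r n) atTop atTop := by
    rw [tendsto_atTop]
    intro L
    have hp := htpos L
    filter_upwards [eventually_ge_atTop (max 1 (Nat.ceil (1 / tailh r L)))] with n hn
    have hn1 : 1 ≤ n := le_trans (le_max_left _ _) hn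
    have hnp : (0 : ℝ) < n := by exact_mod_cast Nat.lt_of_lt_of_le Nat.zero_lt_one hn1
    have hceil : (1 : ℝ) / tailh r L ≤ n := by
      refine le_trans (Nat.le_ceil _) ?_
      exact_mod_cast le_trans (le_max_right _ _) hn
    have hmem : 1 / (n : ℝ) ≤ tailh r L := by
      rw [div_le_iff₀ hp] at hceil
      rw [div_le_iff₀ hnp]
      nlinarith
    exact le_csSup (hbdd n hn1) hmem
  have hc : Tendsto (fun n : ℕ => r (Lscale r n + 1) / tailh r (Lscale r n)) atTop
      (𝓝 (1 - a)) := (sub_ratio_tendsto hrpos hsummable hratio).comp hLtop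
  set x : ℕ → ℝ := fun n => (n : ℝ) * tailh r (Lscale r n) with hx
  set c : ℕ → ℝ := fun n => r (Lscale r n + 1) / tailh r (Lscale r n) with hcdef
  have hkey : ∀ n : ℕ, 1 ≤ n → x n * (1 - c n) < 1 := by
    intro n hn
    have h1 := tailh_succ hsummable (Lscale r n)
    have h2 := hSlt n hn
    have hp := htpos (Lscale r n)
    have hnp : (0 : ℝ) < n := by exact_mod_cast Nat.lt_of_lt_of_le Nat.zero_lt_one hn
    have e : x n * (1 - c n) = (n : ℝ) * tailh r (Lscale r n + 1) := by
      simp only [hx, hcdef]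
      field_simp
      linear_combination h1
    rw [e]
    calc (n : ℝ) * tailh r (Lscale r n + 1) < n * (1 / n) :=
          mul_lt_mul_of_pos_left h2 hnp
      _ = 1 := by field_simp
  -- the comparison function u n = 1/(1 - c n)
  have hone : Tendsto (fun n : ℕ => 1 / (1 - c n)) atTop (𝓝 (1 / a)) := by
    have h1 : Tendsto (fun n : ℕ => 1 - c n) atTop (𝓝 a) := by
      have h := (tendsto_const_nhds : Tendsto (fun _ : ℕ => (1:ℝ)) atTop (𝓝 1)).sub hc
      simpa using h
    exact (tendsto_const_nhds.div h1 (ne_of_gt ha0))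
  have hxle : ∀ᶠ n : ℕ in atTop, x n ≤ 1 / (1 - c n) := by
    have hev : ∀ᶠ n : ℕ in atTop, c n < 1 - a / 2 := hc.eventually_lt_const (by linarith)
    filter_upwards [hev, eventually_ge_atTop 1] with n h1 h2
    have hk := hkey n h2
    have hpos : 0 < 1 - c n := by linarith
    exact le_of_lt ((lt_div_iff₀ hpos).mpr hk)
  have hxlb : ∀ᶠ n : ℕ in atTop, (1 : ℝ) ≤ x n := by
    filter_upwards [eventually_ge_atTop 1] with n hn using claim1 n hn
  have claim2 : Filter.limsup x atTop ≤ 1 / a := by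
    have hcob : IsCoboundedUnder (· ≤ ·) atTop x := by
      apply Filter.IsBoundedUnder.isCoboundedUnder_le
      exact ⟨1, hxlb.mono fun n h => h⟩
    have hbddu : IsBoundedUnder (· ≤ ·) atTop (fun n : ℕ => 1 / (1 - c n)) :=
      hone.isBoundedUnder_le
    calc Filter.limsup x atTop ≤ Filter.limsup (fun n : ℕ => 1 / (1 - c n)) atTop :=
          limsup_le_limsup hxle hcob hbddu
      _ = 1 / a := hone.limsup_eq
  refine ⟨claim1, claim2, ?_⟩
  intro ha
  subst ha
  have hone1 : Tendsto (fun n : ℕ => 1 / (1 - c n)) atTop (𝓝 1) := by simpa using hone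
  exact tendsto_of_tendsto_of_tendsto_of_le_of_le' tendsto_const_nhds hone1 hxlb hxle
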